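/- Let k ∈ ℂ, let r, r' ≥ 0 and z, z' ∈ ℝ with (r,z) ≠ (r',z'), so that R(φ) = √(r² + r'² − 2 r r' cos φ + (z−z')²) is strictly positive for all φ ∈ ℝ. For each m ∈ ℤ define the modal Green's function G_m(r,z,r',z') = (1/2π) ∫₀^{2π} (exp(i k R(φ))/(4π R(φ))) exp(−i m φ) dφ. Then for every φ₀ ∈ ℝ the series ∑_{m ∈ ℤ} G_m(r,z,r',z') exp(i m φ₀) converges absolutely to exp(i k R(φ₀))/(4π R(φ₀)). In particular, for points x = (r cos θ, r sin θ, z) and x' = (r' cos θ', r' sin θ', z') in ℝ³, one has ∑_{m ∈ ℤ} G_m(r,z,r',z') exp(i m (θ−θ')) = exp(i k ‖x−x'‖)/(4π ‖x−x'‖). -/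

import Mathlib

noncomputable section

open MeasureTheory intervalIntegral
open scoped ContDiff

/-- The Euclidean norm on `ℝ³` (realized as `Fin 3 → ℝ`). -/
def enorm3 (x : Fin 3 → ℝ) : ℝ := Real.sqrt (x 0 ^ 2 + x 1 ^ 2 + x 2 ^ 2)

/-- The cylindrical distance function
`R(φ) = √(r² + r'² − 2rr'cos φ + (z−z')²)`. -/
def Rcyl (r z r' z' φ : ℝ) : ℝ :=
  Real.sqrt (r ^ 2 + r' ^ 2 - 2 * r * r' * Real.cos φ + (z - z') ^ 2)

/-- The modal Green's function
`G_m(r,z,r',z') = (1/2π) ∫₀^{2π} exp(ikR(φ))/(4πR(φ)) exp(−imφ) dφ`. -/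
def Gm (k : ℂ) (m : ℤ) (r z r' z' : ℝ) : ℂ :=
  (1 / (2 * (Real.pi : ℂ))) *
    ∫ φ in (0 : ℝ)..(2 * Real.pi),
      Complex.exp (Complex.I * k * (Rcyl r z r' z' φ : ℂ)) /
          (4 * (Real.pi : ℂ) * (Rcyl r z r' z' φ : ℂ)) *
        Complex.exp (-Complex.I * (m : ℂ) * (φ : ℂ))

namespace Statement13Aux

lemma qpos {r r' z z' : ℝ} (hr : 0 ≤ r) (hr' : 0 ≤ r') (hne : (r, z) ≠ (r', z')) (φ : ℝ) :
    0 < r ^ 2 + r' ^ 2 - 2 * r * r' * Real.cos φ + (z - z') ^ 2 := by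
  have h1 : 2 * r * r' * Real.cos φ ≤ 2 * r * r' :=
    mul_le_of_le_one_right (by positivity) (Real.cos_le_one φ)
  have h2 : r ≠ r' ∨ z ≠ z' := by
    by_contra h; push_neg at h; exact hne (by rw [h.1, h.2])
  rcases h2 with h | h
  · have h3 : 0 < (r - r') ^ 2 :=
      (sq_nonneg _).lt_of_ne (Ne.symm (pow_ne_zero 2 (sub_ne_zero.mpr h)))
    nlinarith [sq_nonneg (z - z')]
  · have h3 : 0 < (z - z') ^ 2 :=
      (sq_nonneg _).lt_of_ne (Ne.symm (pow_ne_zero 2 (sub_ne_zero.mpr h)))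
    nlinarith [sq_nonneg (r - r')]

lemma Rpos {r r' z z' : ℝ} (hr : 0 ≤ r) (hr' : 0 ≤ r') (hne : (r, z) ≠ (r', z')) (φ : ℝ) :
    0 < Rcyl r z r' z' φ := Real.sqrt_pos.mpr (qpos hr hr' hne φ)

lemma contDiff_Rcyl {r r' z z' : ℝ} (hr : 0 ≤ r) (hr' : 0 ≤ r') (hne : (r, z) ≠ (r', z')) :
    ContDiff ℝ ∞ (Rcyl r z r' z') := by
  have hq : ContDiff ℝ ∞ (fun φ : ℝ => r ^ 2 + r' ^ 2 - 2 * r * r' * Real.cos φ + (z - z') ^ 2) :=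
    ((contDiff_const.sub (contDiff_const.mul Real.contDiff_cos)).add contDiff_const)
  rw [contDiff_iff_contDiffAt]
  intro φ
  exact hq.contDiffAt.sqrt (qpos hr hr' hne φ).ne'

lemma contDiff_fker (k : ℂ) {r r' z z' : ℝ} (hr : 0 ≤ r) (hr' : 0 ≤ r') (hne : (r, z) ≠ (r', z')) :
    ContDiff ℝ ∞ (fun φ : ℝ => Complex.exp (Complex.I * k * (Rcyl r z r' z' φ : ℂ)) /
      (4 * (Real.pi : ℂ) * (Rcyl r z r' z' φ : ℂ))) := by
  have hR := contDiff_Rcyl (r := r) (r' := r') (z := z) (z' := z') hr hr' hne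
  have hRC : ContDiff ℝ ∞ (fun φ : ℝ => ((Rcyl r z r' z' φ : ℝ) : ℂ)) :=
    Complex.ofRealCLM.contDiff.comp hR
  have h1 : ContDiff ℝ ∞ (fun φ : ℝ => Complex.I * k * ((Rcyl r z r' z' φ : ℝ) : ℂ)) :=
    contDiff_const.mul hRC
  have hne4 : ∀ φ, 4 * Real.pi * Rcyl r z r' z' φ ≠ 0 := fun φ =>
    (mul_pos (by positivity) (Rpos hr hr' hne φ)).ne'
  have hRinv : ContDiff ℝ ∞ (fun φ : ℝ => (4 * Real.pi * Rcyl r z r' z' φ)⁻¹) :=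
    (contDiff_const.mul hR).inv hne4
  have hmain : ContDiff ℝ ∞ (fun φ : ℝ => Complex.exp (Complex.I * k * (Rcyl r z r' z' φ : ℂ)) *
      (((4 * Real.pi * Rcyl r z r' z' φ)⁻¹ : ℝ) : ℂ)) :=
    ((Complex.contDiff_exp (𝕜 := ℝ)).comp h1).mul (Complex.ofRealCLM.contDiff.comp hRinv)
  have heq : (fun φ : ℝ => Complex.exp (Complex.I * k * (Rcyl r z r' z' φ : ℂ)) /
      (4 * (Real.pi : ℂ) * (Rcyl r z r' z' φ : ℂ))) =
      (fun φ : ℝ => Complex.exp (Complex.I * k * (Rcyl r z r' z' φ : ℂ)) *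
      (((4 * Real.pi * Rcyl r z r' z' φ)⁻¹ : ℝ) : ℂ)) := by
    funext φ
    rw [div_eq_mul_inv]
    push_cast
    ring
  rw [heq]
  exact hmain

end Statement13Aux

open Statement13Aux

/-- The Fourier series of modal Green's functions converges absolutely and sums to
the Helmholtz Green's function: `∑ₘ G_m(r,z,r',z') e^{imφ₀} = exp(ikR(φ₀))/(4πR(φ₀))`,
and in cylindrical coordinates
`∑ₘ G_m(r,z,r',z') e^{im(θ−θ')} = exp(ik‖x−x'‖)/(4π‖x−x'‖)`. -/
theorem statement13 (k : ℂ) (r r' z z' : ℝ) (hr : 0 ≤ r) (hr' : 0 ≤ r')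
    (hne : (r, z) ≠ (r', z')) :
    (∀ φ₀ : ℝ,
      Summable (fun m : ℤ => ‖Gm k m r z r' z' * Complex.exp (Complex.I * (m : ℂ) * (φ₀ : ℂ))‖) ∧
      ∑' m : ℤ, Gm k m r z r' z' * Complex.exp (Complex.I * (m : ℂ) * (φ₀ : ℂ)) =
        Complex.exp (Complex.I * k * (Rcyl r z r' z' φ₀ : ℂ)) /
          (4 * (Real.pi : ℂ) * (Rcyl r z r' z' φ₀ : ℂ))) ∧
    (∀ θ θ' : ℝ,
      ∑' m : ℤ, Gm k m r z r' z' * Complex.exp (Complex.I * (m : ℂ) * ((θ - θ' : ℝ) : ℂ)) =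
        Complex.exp (Complex.I * k *
            (enorm3 (![r * Real.cos θ, r * Real.sin θ, z] -
              ![r' * Real.cos θ', r' * Real.sin θ', z']) : ℂ)) /
          (4 * (Real.pi : ℂ) *
            (enorm3 (![r * Real.cos θ, r * Real.sin θ, z] -
              ![r' * Real.cos θ', r' * Real.sin θ', z']) : ℂ))) := by
  haveI hT : Fact (0 < 2 * Real.pi) := ⟨Real.two_pi_pos⟩
  have h2π : (0 : ℝ) < 2 * Real.pi := Real.two_pi_pos
  set f : ℝ → ℂ := fun φ => Complex.exp (Complex.I * k * (Rcyl r z r' z' φ : ℂ)) /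
      (4 * (Real.pi : ℂ) * (Rcyl r z r' z' φ : ℂ)) with hfdef
  have hcd : ContDiff ℝ ∞ f := contDiff_fker k hr hr' hne
  have hcont : Continuous f := hcd.continuous
  have hperR : ∀ φ, Rcyl r z r' z' (φ + 2 * Real.pi) = Rcyl r z r' z' φ := fun φ => by
    simp only [Rcyl, Real.cos_add_two_pi]
  have hper : Function.Periodic f (2 * Real.pi) := fun x => by
    simp only [hfdef, hperR]
  have hone : (1 : WithTop ℕ∞) ≤ ∞ := by exact_mod_cast le_top
  have hd1 : ∀ x, HasDerivAt f (deriv f x) x := fun x =>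
    ((hcd.differentiable (by simp)) x).hasDerivAt
  have hcd1 : ContDiff ℝ ∞ (deriv f) := (contDiff_infty_iff_deriv.mp hcd).2
  have hd2 : ∀ x, HasDerivAt (deriv f) (deriv (deriv f) x) x := fun x =>
    ((hcd1.differentiable (by simp)) x).hasDerivAt
  have hc1 : Continuous (deriv f) := hcd1.continuous
  have hc2 : Continuous (deriv (deriv f)) := (contDiff_infty_iff_deriv.mp hcd1).2.continuous
  have hper1 : ∀ x, deriv f (x + 2 * Real.pi) = deriv f x := fun x => by
    conv_rhs => rw [show f = (fun y => f (y + 2 * Real.pi)) from funext fun y => (hper y).symm]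
    rw [deriv_comp_add_const]
  -- the function on the circle
  let F : C(AddCircle (2 * Real.pi), ℂ) := ⟨hper.lift, continuous_coinduced_dom.mpr hcont⟩
  have hFcoe : ∀ x : ℝ, F (x : AddCircle (2 * Real.pi)) = f x := fun x =>
    hper.lift_coe x
  have hfourier : ∀ (m : ℤ) (x : ℝ),
      fourier m (x : AddCircle (2 * Real.pi)) = Complex.exp (Complex.I * m * x) := by
    intro m x
    rw [fourier_coe_apply]
    congr 1
    have hπ : (Real.pi : ℂ) ≠ 0 := Complex.ofReal_ne_zero.mpr Real.pi_ne_zero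
    push_cast
    field_simp
  -- identification of Fourier coefficients with Gm
  have hGm : ∀ m : ℤ, fourierCoeff (⇑F) m = Gm k m r z r' z' := by
    intro m
    rw [fourierCoeff_eq_intervalIntegral _ m 0, zero_add]
    unfold Gm
    rw [Complex.real_smul]
    push_cast
    congr 1
    refine intervalIntegral.integral_congr fun x hx => ?_
    rw [smul_eq_mul, hFcoe x, hfourier (-m) x, mul_comm]
    congr 1
    push_cast
    ring
  -- identification with fourierCoeffOn
  have hB : ∀ m : ℤ, fourierCoeff (⇑F) m = fourierCoeffOn h2π f m := by
    intro m
    rw [fourierCoeff_eq_intervalIntegral _ m 0, zero_add, fourierCoeffOn_eq_integral]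
    simp only [hFcoe, fourier_coe_apply, smul_eq_mul, sub_zero]
  -- integration by parts step
  have hstep : ∀ (g g' : ℝ → ℂ), (∀ x, HasDerivAt g (g' x) x) → Continuous g' →
      g (2 * Real.pi) = g 0 → ∀ m : ℤ, m ≠ 0 →
      ‖fourierCoeffOn h2π g m‖ = (1 / |(m : ℝ)|) * ‖fourierCoeffOn h2π g' m‖ := by
    intro g g' hg hg' hgper m hm
    rw [fourierCoeffOn_of_hasDerivAt h2π hm (fun x _ => hg x) (hg'.intervalIntegrable _ _)]
    rw [hgper]
    simp only [sub_self, mul_zero, zero_sub]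
    rw [norm_mul, norm_neg, norm_mul]
    have e1 : ‖(1 : ℂ) / (-2 * ↑Real.pi * Complex.I * (m : ℂ))‖ =
        1 / (2 * Real.pi * |(m : ℝ)|) := by
      rw [norm_div, norm_one]
      simp [Complex.norm_real, Complex.norm_intCast, abs_of_pos Real.pi_pos]
    have e2 : ‖((2 * Real.pi : ℝ) : ℂ) - ((0 : ℝ) : ℂ)‖ = 2 * Real.pi := by
      rw [Complex.ofReal_zero, sub_zero, Complex.norm_real, Real.norm_eq_abs, abs_of_pos h2π]
    rw [e1, e2]
    have hmne : |(m : ℝ)| ≠ 0 := by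
      simp only [ne_eq, abs_eq_zero, Int.cast_eq_zero]
      exact hm
    field_simp
  -- sup bound for continuous functions
  obtain ⟨M, hM⟩ := (isCompact_Icc (a := (0 : ℝ)) (b := 2 * Real.pi)).exists_bound_of_continuousOn
    hc2.continuousOn
  have hMb : ∀ m : ℤ, ‖fourierCoeffOn h2π (deriv (deriv f)) m‖ ≤ M := by
    intro m
    rw [fourierCoeffOn_eq_integral]
    have hIb : ‖∫ x in (0 : ℝ)..(2 * Real.pi),
        fourier (-m) (x : AddCircle (2 * Real.pi - 0)) • deriv (deriv f) x‖ ≤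
        M * |2 * Real.pi - 0| := by
      apply intervalIntegral.norm_integral_le_of_norm_le_const
      intro x hx
      rw [norm_smul]
      have h1 : ‖fourier (-m) ((x : ℝ) : AddCircle (2 * Real.pi - 0))‖ = 1 := Circle.norm_coe _
      rw [h1, one_mul]
      apply hM
      rw [Set.uIoc_of_le h2π.le] at hx
      exact ⟨hx.1.le, hx.2⟩
    rw [norm_smul]
    calc ‖(1 / (2 * Real.pi - 0) : ℝ)‖ * ‖∫ x in (0 : ℝ)..(2 * Real.pi),
          fourier (-m) (x : AddCircle (2 * Real.pi - 0)) • deriv (deriv f) x‖ ≤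
        ‖(1 / (2 * Real.pi - 0) : ℝ)‖ * (M * |2 * Real.pi - 0|) := by
          exact mul_le_mul_of_nonneg_left hIb (norm_nonneg _)
      _ = M := by
          rw [Real.norm_eq_abs, sub_zero, abs_of_pos (by positivity : (0:ℝ) < 1/(2*Real.pi)),
            abs_of_pos h2π]
          field_simp
  -- decay of Fourier coefficients
  have hdecay : ∀ m : ℤ, m ≠ 0 → ‖fourierCoeff (⇑F) m‖ ≤ M * (1 / (m : ℝ) ^ 2) := by
    intro m hm
    rw [hB m, hstep f (deriv f) hd1 hc1 (by simpa using hper 0) m hm,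
      hstep (deriv f) (deriv (deriv f)) hd2 hc2 (by simpa using hper1 0) m hm]
    have habs : (1 / |(m : ℝ)|) * ((1 / |(m : ℝ)|) * ‖fourierCoeffOn h2π (deriv (deriv f)) m‖) =
        (1 / (m : ℝ) ^ 2) * ‖fourierCoeffOn h2π (deriv (deriv f)) m‖ := by
      rw [← mul_assoc]
      congr 1
      rw [div_mul_div_comm, one_mul, ← sq_abs]
      ring
    rw [habs, mul_comm M]
    exact mul_le_mul_of_nonneg_left (hMb m) (by positivity)
  -- summability
  have hnormsum : Summable (fun m : ℤ => ‖fourierCoeff (⇑F) m‖) := by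
    apply Summable.of_norm_bounded_eventually (g := fun m : ℤ => M * (1 / (m : ℝ) ^ 2))
      ((Real.summable_one_div_int_pow.mpr one_lt_two).mul_left M)
    filter_upwards [Filter.eventually_cofinite_ne 0] with m hm
    rw [norm_norm]
    exact hdecay m hm
  have hsummable : Summable (fourierCoeff (⇑F)) := hnormsum.of_norm
  -- pointwise convergence
  have hkey : ∀ φ₀ : ℝ, HasSum
      (fun m : ℤ => Gm k m r z r' z' * Complex.exp (Complex.I * (m : ℂ) * (φ₀ : ℂ))) (f φ₀) := by
    intro φ₀
    have h := has_pointwise_sum_fourier_series_of_summable hsummable (φ₀ : AddCircle (2 * Real.pi))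
    simp only [hGm, hfourier, smul_eq_mul, hFcoe] at h
    exact h
  have hexp1 : ∀ (m : ℤ) (x : ℝ), ‖Complex.exp (Complex.I * (m : ℂ) * (x : ℂ))‖ = 1 := by
    intro m x
    rw [Complex.norm_exp]
    simp [Complex.exp_zero]
  constructor
  · intro φ₀
    refine ⟨?_, ?_⟩
    · have heq : (fun m : ℤ => ‖Gm k m r z r' z' * Complex.exp (Complex.I * (m : ℂ) * (φ₀ : ℂ))‖) =
          fun m : ℤ => ‖fourierCoeff (⇑F) m‖ := by
        funext m
        rw [norm_mul, hGm m, hexp1 m φ₀, mul_one]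
      rw [heq]
      exact hnormsum
    · exact (hkey φ₀).tsum_eq
  · intro θ θ'
    have henorm : enorm3 (![r * Real.cos θ, r * Real.sin θ, z] -
        ![r' * Real.cos θ', r' * Real.sin θ', z']) = Rcyl r z r' z' (θ - θ') := by
      unfold enorm3 Rcyl
      simp only [Pi.sub_apply, Matrix.cons_val_zero, Matrix.cons_val_one, Matrix.head_cons,
        Matrix.cons_val_two, Matrix.tail_cons]
      rw [Real.cos_sub]
      congr 1
      linear_combination r ^ 2 * Real.sin_sq_add_cos_sq θ + r' ^ 2 * Real.sin_sq_add_cos_sq θ'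
    rw [henorm]
    exact (hkey (θ - θ')).tsum_eq
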